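/- Fix finitely many data points ε_{ij} ∈ ℝ for i = 0,…,m and j = 1,…,n_i, with n = Σ_i n_i and ρ_r = n_r/n > 0 for r = 0,…,m, and a differentiable function q : ℝ → ℝ^{d₂} whose first component is identically 1. For θ = (θ_1,…,θ_m) with θ_0 = 0, define h(t;θ) = Σ_{r=0}^m ρ_r exp(θ_rᵀ q(t)) and the dual empirical log-likelihood ℓ̆_n(θ) = − Σ_{i,j} log h(ε_{ij};θ) + Σ_{i,j} θ_iᵀ q(ε_{ij}). Suppose θ̂ is a stationary point of ℓ̆_n (its gradient with respect to each θ_k, k = 1,…,m, vanishes at θ̂), and define p̂_{ij} = 1/(n h(ε_{ij}; θ̂)). Then for every k = 1,…,m, Σ_{i,j} p̂_{ij} exp(θ̂_kᵀ q(ε_{ij})) = 1, and moreover Σ_{i,j} p̂_{ij} = 1; consequently each fitted distribution Ĝ_k(t) = Σ_{i,j} p̂_{ij} exp(θ̂_kᵀ q(ε_{ij})) 1(ε_{ij} ≤ t) is a genuine probability distribution function. -/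

import Mathlib

open Finset Filter Topology

/-- **Stationary points of the dual empirical log-likelihood yield genuine fitted
distributions.** If `θ̂` is a stationary point of the dual empirical log-likelihood
`ℓ̆_n θ = − Σ_{i,j} log h(ε_{ij}; θ) + Σ_{i,j} θ_iᵀ q(ε_{ij})` (with `θ_0 = 0`,
`h(t;θ) = Σ_r ρ_r exp (θ_rᵀ q t)`, `ρ_r = n_r/n`), and `p̂_{ij} = 1/(n h(ε_{ij}; θ̂))`,
then `Σ p̂_{ij} exp (θ̂_kᵀ q (ε_{ij})) = 1` for each `k = 1, …, m`, `Σ p̂_{ij} = 1`, and each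
fitted `Ĝ_k(t) = Σ p̂_{ij} exp (θ̂_kᵀ q (ε_{ij})) 1(ε_{ij} ≤ t)` is a genuine probability
distribution function. -/
theorem stationary_point_fitted_distributions {m d₂ : ℕ} [NeZero d₂]
    {nk : Fin (m + 1) → ℕ} (hnk : ∀ i, 0 < nk i)
    (n : ℕ) (hn : n = ∑ i : Fin (m + 1), nk i)
    (ε : (i : Fin (m + 1)) → Fin (nk i) → ℝ)
    (q : ℝ → Fin d₂ → ℝ) (hq_diff : Differentiable ℝ q) (hq1 : ∀ t, q t 0 = 1)
    (ρ : Fin (m + 1) → ℝ) (hρ : ∀ r, ρ r = (nk r : ℝ) / (n : ℝ))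
    (h : ℝ → (Fin m → Fin d₂ → ℝ) → ℝ)
    (hh : ∀ t θ, h t θ = ∑ r : Fin (m + 1),
      ρ r * Real.exp (∑ i, (Fin.cons 0 θ : Fin (m + 1) → Fin d₂ → ℝ) r i * q t i))
    (ell : (Fin m → Fin d₂ → ℝ) → ℝ)
    (hell : ∀ θ, ell θ =
      - (∑ i : Fin (m + 1), ∑ j : Fin (nk i), Real.log (h (ε i j) θ))
      + ∑ i : Fin (m + 1), ∑ j : Fin (nk i),
          ∑ i' , (Fin.cons 0 θ : Fin (m + 1) → Fin d₂ → ℝ) i i' * q (ε i j) i')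
    (θhat : Fin m → Fin d₂ → ℝ)
    (hstat : HasFDerivAt ell (0 : (Fin m → Fin d₂ → ℝ) →L[ℝ] ℝ) θhat)
    (phat : (i : Fin (m + 1)) → Fin (nk i) → ℝ)
    (hphat : ∀ i j, phat i j = 1 / ((n : ℝ) * h (ε i j) θhat))
    (G : Fin (m + 1) → ℝ → ℝ)
    (hG : ∀ k t, G k t = ∑ i : Fin (m + 1), ∑ j : Fin (nk i),
      phat i j
        * Real.exp (∑ i', (Fin.cons 0 θhat : Fin (m + 1) → Fin d₂ → ℝ) k i' * q (ε i j) i')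
        * (if ε i j ≤ t then (1 : ℝ) else 0)) :
    (∀ k : Fin m,
        ∑ i : Fin (m + 1), ∑ j : Fin (nk i),
          phat i j * Real.exp (∑ i', θhat k i' * q (ε i j) i') = 1) ∧
      (∑ i : Fin (m + 1), ∑ j : Fin (nk i), phat i j = 1) ∧
      ∀ k : Fin (m + 1),
        Monotone (G k) ∧ Tendsto (G k) atTop (𝓝 1) ∧ Tendsto (G k) atBot (𝓝 0) := by
  classical
  have hn0 : 0 < n := by
    rw [hn]; exact Finset.sum_pos (fun i _ => hnk i) ⟨0, Finset.mem_univ 0⟩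
  have hnR : (0:ℝ) < n := by exact_mod_cast hn0
  have hρpos : ∀ r, 0 < ρ r := by
    intro r; rw [hρ r]
    exact div_pos (by exact_mod_cast hnk r) hnR
  have hhpos : ∀ t θ, 0 < h t θ := by
    intro t θ; rw [hh]
    exact Finset.sum_pos (fun r _ => mul_pos (hρpos r) (Real.exp_pos _)) ⟨0, Finset.mem_univ 0⟩
  -- The key stationarity equation
  have key : ∀ k : Fin m,
      ∑ i : Fin (m+1), ∑ j : Fin (nk i),
        ρ k.succ * Real.exp (∑ i', θhat k i' * q (ε i j) i') / h (ε i j) θhat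
        = (nk k.succ : ℝ) := by
    intro k
    set v : Fin m → Fin d₂ → ℝ := Pi.single k (Pi.single 0 1) with hv
    have hw : ∀ (r : Fin (m+1)) (t : ℝ),
        (∑ i', (Fin.cons 0 v : Fin (m+1) → Fin d₂ → ℝ) r i' * q t i')
          = if r = k.succ then 1 else 0 := by
      intro r t
      induction r using Fin.cases with
      | zero => simp [Ne.symm (Fin.succ_ne_zero k)]
      | succ l =>
        by_cases hl : l = k
        · subst hl
          simp [hv, Pi.single_apply, ite_mul, hq1]
        · simp [hv, Pi.single_apply, hl, Fin.succ_inj]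
    have hcons : ∀ (s : ℝ) (r : Fin (m+1)),
        (Fin.cons 0 (θhat + s • v) : Fin (m+1) → Fin d₂ → ℝ) r
          = (Fin.cons 0 θhat : Fin (m+1) → Fin d₂ → ℝ) r
            + s • (Fin.cons 0 v : Fin (m+1) → Fin d₂ → ℝ) r := by
      intro s r
      induction r using Fin.cases with
      | zero => simp
      | succ l => simp
    have e1 : ∀ (s : ℝ) (r : Fin (m+1)) (t : ℝ),
        (∑ i', (Fin.cons 0 (θhat + s • v) : Fin (m+1) → Fin d₂ → ℝ) r i' * q t i')
          = (∑ i', (Fin.cons 0 θhat : Fin (m+1) → Fin d₂ → ℝ) r i' * q t i')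
            + s * (if r = k.succ then 1 else 0) := by
      intro s r t
      rw [← hw r t, Finset.mul_sum, ← Finset.sum_add_distrib]
      apply Finset.sum_congr rfl
      intro i' _
      rw [hcons s r]
      simp [add_mul, mul_assoc]
    have hheq : ∀ (s : ℝ) (i : Fin (m+1)) (j : Fin (nk i)),
        h (ε i j) (θhat + s • v)
          = h (ε i j) θhat
            + ρ k.succ * Real.exp (∑ i', θhat k i' * q (ε i j) i') * (Real.exp s - 1) := by
      intro s i j
      rw [hh (ε i j) (θhat + s • v), hh (ε i j) θhat]
      have hterm : ∀ r : Fin (m+1),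
          ρ r * Real.exp (∑ i', (Fin.cons 0 (θhat + s • v) : Fin (m+1) → Fin d₂ → ℝ) r i' * q (ε i j) i')
            = ρ r * Real.exp (∑ i', (Fin.cons 0 θhat : Fin (m+1) → Fin d₂ → ℝ) r i' * q (ε i j) i')
              + (if r = k.succ then
                  ρ r * Real.exp (∑ i', (Fin.cons 0 θhat : Fin (m+1) → Fin d₂ → ℝ) r i' * q (ε i j) i')
                    * (Real.exp s - 1)
                 else 0) := by
        intro r
        rw [e1 s r]
        by_cases hr : r = k.succ
        · subst hr
          simp [Real.exp_add]
          ring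
        · simp [hr]
      rw [Finset.sum_congr rfl (fun r _ => hterm r), Finset.sum_add_distrib]
      congr 1
      rw [Finset.sum_ite_eq' Finset.univ k.succ]
      simp [Fin.cons_succ]
    -- derivative zero along the line
    have hf0 : HasDerivAt (fun s : ℝ => ell (θhat + s • v)) 0 0 := by
      have hline : HasDerivAt (fun s : ℝ => θhat + s • v) v 0 := by
        simpa using ((hasDerivAt_id (0:ℝ)).smul_const v).const_add θhat
      have h0 : HasFDerivAt ell (0 : (Fin m → Fin d₂ → ℝ) →L[ℝ] ℝ)
          ((fun s : ℝ => θhat + s • v) 0) := by simpa using hstat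
      have h1 := h0.comp_hasDerivAt 0 hline
      simp only [ContinuousLinearMap.zero_apply] at h1
      exact h1
    -- explicit derivative
    have hg : HasDerivAt (fun s : ℝ => ell (θhat + s • v))
        (-(∑ i : Fin (m+1), ∑ j : Fin (nk i),
            ρ k.succ * Real.exp (∑ i', θhat k i' * q (ε i j) i') / h (ε i j) θhat)
          + (nk k.succ : ℝ)) 0 := by
      have hfun : (fun s : ℝ => ell (θhat + s • v))
          = fun s => -(∑ i : Fin (m+1), ∑ j : Fin (nk i), Real.log (h (ε i j) θhat
              + ρ k.succ * Real.exp (∑ i', θhat k i' * q (ε i j) i') * (Real.exp s - 1)))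
            + ((∑ i : Fin (m+1), ∑ j : Fin (nk i),
                ∑ i', (Fin.cons 0 θhat : Fin (m+1) → Fin d₂ → ℝ) i i' * q (ε i j) i')
               + s * (nk k.succ : ℝ)) := by
        funext s
        rw [hell]
        congr 1
        · rw [neg_inj]
          exact Finset.sum_congr rfl fun i _ => Finset.sum_congr rfl fun j _ => by rw [hheq]
        · rw [Finset.sum_congr rfl (fun i _ => Finset.sum_congr rfl fun j _ => e1 s i (ε i j))]
          rw [Finset.sum_congr rfl
            (fun i (_ : i ∈ Finset.univ) => Finset.sum_add_distrib), Finset.sum_add_distrib]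
          congr 1
          simp only [Finset.sum_const, Finset.card_univ, Fintype.card_fin, nsmul_eq_mul,
            mul_ite, mul_one, mul_zero]
          rw [Finset.sum_ite_eq' Finset.univ k.succ]
          simp [mul_comm]
      rw [hfun]
      have hlog : ∀ (i : Fin (m+1)) (j : Fin (nk i)), HasDerivAt
          (fun s => Real.log (h (ε i j) θhat
            + ρ k.succ * Real.exp (∑ i', θhat k i' * q (ε i j) i') * (Real.exp s - 1)))
          (ρ k.succ * Real.exp (∑ i', θhat k i' * q (ε i j) i') / h (ε i j) θhat) 0 := by
        intro i j
        have h1 : HasDerivAt (fun s => h (ε i j) θhat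
            + ρ k.succ * Real.exp (∑ i', θhat k i' * q (ε i j) i') * (Real.exp s - 1))
            (ρ k.succ * Real.exp (∑ i', θhat k i' * q (ε i j) i')) 0 := by
          simpa using (((Real.hasDerivAt_exp 0).sub_const 1).const_mul
            (ρ k.succ * Real.exp (∑ i', θhat k i' * q (ε i j) i'))).const_add (h (ε i j) θhat)
        have h2 := h1.log (by simpa using (hhpos (ε i j) θhat).ne')
        simpa using h2
      have hsum := HasDerivAt.fun_sum (fun i (_ : i ∈ Finset.univ) =>
        HasDerivAt.fun_sum (fun j (_ : j ∈ Finset.univ) => hlog i j))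
      have hlin : HasDerivAt (fun s : ℝ =>
          (∑ i : Fin (m+1), ∑ j : Fin (nk i),
            ∑ i', (Fin.cons 0 θhat : Fin (m+1) → Fin d₂ → ℝ) i i' * q (ε i j) i')
          + s * (nk k.succ : ℝ)) (nk k.succ : ℝ) 0 := by
        simpa using ((hasDerivAt_id (0:ℝ)).mul_const ((nk k.succ : ℝ))).const_add
          (∑ i : Fin (m+1), ∑ j : Fin (nk i),
            ∑ i', (Fin.cons 0 θhat : Fin (m+1) → Fin d₂ → ℝ) i i' * q (ε i j) i')
      exact hsum.neg.add hlin
    have h0 := hf0.unique hg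
    linarith [h0]
  -- Part 1
  have part1 : ∀ k : Fin m,
      ∑ i : Fin (m+1), ∑ j : Fin (nk i),
        phat i j * Real.exp (∑ i', θhat k i' * q (ε i j) i') = 1 := by
    intro k
    have hk := key k
    have hNpos : (0:ℝ) < (nk k.succ : ℝ) := by exact_mod_cast hnk k.succ
    have hterm : ∀ (i : Fin (m+1)) (j : Fin (nk i)),
        ρ k.succ * Real.exp (∑ i', θhat k i' * q (ε i j) i') / h (ε i j) θhat
          = (nk k.succ : ℝ) * (phat i j * Real.exp (∑ i', θhat k i' * q (ε i j) i')) := by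
      intro i j
      rw [hphat i j, hρ k.succ]
      have ha := (hhpos (ε i j) θhat).ne'
      field_simp
    rw [Finset.sum_congr rfl (fun i _ => Finset.sum_congr rfl fun j _ => hterm i j)] at hk
    simp only [← Finset.mul_sum] at hk
    exact mul_left_cancel₀ hNpos.ne' (hk.trans (mul_one _).symm)
  -- Part 2
  have sumρ : ∑ r : Fin (m+1), ρ r = 1 := by
    have hcast : ((n:ℝ)) = ∑ r : Fin (m+1), (nk r : ℝ) := by exact_mod_cast hn
    simp only [hρ]
    rw [← Finset.sum_div, ← hcast, div_self hnR.ne']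
  have part2 : ∑ i : Fin (m+1), ∑ j : Fin (nk i), phat i j = 1 := by
    have hph : ∀ (i : Fin (m+1)) (j : Fin (nk i)),
        phat i j * h (ε i j) θhat = 1 / (n:ℝ) := by
      intro i j; rw [hphat]
      field_simp
      exact div_self (hhpos _ _).ne'
    have htot : ∑ i : Fin (m+1), ∑ j : Fin (nk i), phat i j * h (ε i j) θhat = 1 := by
      simp only [hph, Finset.sum_const, Finset.card_univ, Fintype.card_fin, nsmul_eq_mul]
      rw [← Finset.sum_mul]
      have : ∑ i : Fin (m+1), ((nk i : ℝ)) = (n:ℝ) := by exact_mod_cast hn.symm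
      rw [this]
      field_simp
    have hexp : ∀ (i : Fin (m+1)) (j : Fin (nk i)), phat i j * h (ε i j) θhat
        = ∑ r : Fin (m+1), ρ r * (phat i j
            * Real.exp (∑ i', (Fin.cons 0 θhat : Fin (m+1) → Fin d₂ → ℝ) r i' * q (ε i j) i')) := by
      intro i j; rw [hh, Finset.mul_sum]
      exact Finset.sum_congr rfl fun r _ => by ring
    rw [Finset.sum_congr rfl (fun i _ => Finset.sum_congr rfl fun j _ => hexp i j)] at htot
    rw [Finset.sum_congr rfl (fun i (_ : i ∈ Finset.univ) => Finset.sum_comm),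
      Finset.sum_comm] at htot
    simp only [← Finset.mul_sum] at htot
    rw [Fin.sum_univ_succ] at htot
    have hsucc : ∀ l : Fin m,
        ρ l.succ * (∑ i : Fin (m+1), ∑ j : Fin (nk i), phat i j
          * Real.exp (∑ i', (Fin.cons 0 θhat : Fin (m+1) → Fin d₂ → ℝ) l.succ i' * q (ε i j) i'))
          = ρ l.succ := by
      intro l
      have := part1 l
      simp only [Fin.cons_succ]
      rw [this, mul_one]
    rw [Finset.sum_congr rfl (fun l _ => hsucc l)] at htot
    have hzero : (∑ i : Fin (m+1), ∑ j : Fin (nk i), phat i j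
        * Real.exp (∑ i', (Fin.cons 0 θhat : Fin (m+1) → Fin d₂ → ℝ) 0 i' * q (ε i j) i'))
        = ∑ i : Fin (m+1), ∑ j : Fin (nk i), phat i j := by
      apply Finset.sum_congr rfl
      intro i _
      apply Finset.sum_congr rfl
      intro j _
      simp
    rw [hzero] at htot
    rw [Fin.sum_univ_succ] at sumρ
    have : ρ 0 * (∑ i : Fin (m+1), ∑ j : Fin (nk i), phat i j) = ρ 0 * 1 := by
      rw [mul_one]; linarith
    exact mul_left_cancel₀ (hρpos 0).ne' this
  refine ⟨part1, part2, ?_⟩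
  -- Part 3
  have hSall : ∀ k : Fin (m+1),
      ∑ i : Fin (m+1), ∑ j : Fin (nk i), phat i j
        * Real.exp (∑ i', (Fin.cons 0 θhat : Fin (m+1) → Fin d₂ → ℝ) k i' * q (ε i j) i') = 1 := by
    intro k
    induction k using Fin.cases with
    | zero => simpa using part2
    | succ l => simpa [Fin.cons_succ] using part1 l
  have hppos : ∀ (i : Fin (m+1)) (j : Fin (nk i)), 0 < phat i j := by
    intro i j; rw [hphat]
    exact div_pos one_pos (mul_pos hnR (hhpos _ _))
  obtain ⟨M, hM⟩ : ∃ M : ℝ, ∀ (i : Fin (m+1)) (j : Fin (nk i)), ε i j ≤ M := by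
    obtain ⟨M, hM⟩ :=
      (Set.finite_range (fun p : (Σ i : Fin (m+1), Fin (nk i)) => ε p.1 p.2)).bddAbove
    exact ⟨M, fun i j => hM (Set.mem_range_self (⟨i, j⟩ : Σ i : Fin (m+1), Fin (nk i)))⟩
  obtain ⟨L, hL⟩ : ∃ L : ℝ, ∀ (i : Fin (m+1)) (j : Fin (nk i)), L ≤ ε i j := by
    obtain ⟨L, hL⟩ :=
      (Set.finite_range (fun p : (Σ i : Fin (m+1), Fin (nk i)) => ε p.1 p.2)).bddBelow
    exact ⟨L, fun i j => hL (Set.mem_range_self (⟨i, j⟩ : Σ i : Fin (m+1), Fin (nk i)))⟩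
  intro k
  refine ⟨?_, ?_, ?_⟩
  · intro s t hst
    rw [hG k s, hG k t]
    refine Finset.sum_le_sum fun i _ => Finset.sum_le_sum fun j _ => ?_
    have h1 : (0:ℝ) ≤ phat i j * Real.exp (∑ i', (Fin.cons 0 θhat : Fin (m+1) → Fin d₂ → ℝ) k i' * q (ε i j) i') :=
      le_of_lt (mul_pos (hppos i j) (Real.exp_pos _))
    apply mul_le_mul_of_nonneg_left ?_ h1
    by_cases hε : ε i j ≤ s
    · simp [hε, hε.trans hst]
    · simp only [hε, if_false]
      split <;> norm_num
  · have hev : G k =ᶠ[atTop] fun _ => 1 := by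
      filter_upwards [eventually_ge_atTop M] with t ht
      rw [hG]
      have hind : ∀ (i : Fin (m+1)) (j : Fin (nk i)),
          (if ε i j ≤ t then (1:ℝ) else 0) = 1 := fun i j => if_pos ((hM i j).trans ht)
      simp only [hind, mul_one]
      exact hSall k
    exact Tendsto.congr' hev.symm tendsto_const_nhds
  · have hev : G k =ᶠ[atBot] fun _ => 0 := by
      filter_upwards [eventually_lt_atBot L] with t ht
      rw [hG]
      have hind : ∀ (i : Fin (m+1)) (j : Fin (nk i)),
          (if ε i j ≤ t then (1:ℝ) else 0) = 0 := fun i j => if_neg (by linarith [hL i j])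
      simp [hind]
    exact Tendsto.congr' hev.symm tendsto_const_nhds
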